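/- Fix N ∈ ℕ with N ≥ 1 and let a = (a_0,…,a_N) ∈ ℝ^{N+1} with a_0 = 1. If Σ_{n=0}^{N} (a_n/n!) φ̃_n(y) h_n(x) ≥ 0 for all y ∈ {−N,…,0} and all x ∈ ℝ (where φ̃_0 = 1 and φ̃_n(y) = (−1)^y C(n−1, −y) for n ≥ 1), then a_n = 0 for every n ∈ {1,…,N}. Consequently, the only Markov intertwining from the reverse Yule generator D̃_N to the Ornstein–Uhlenbeck generator is trivial. -/

import Mathlib

/-- The probabilists' Hermite polynomials over `ℝ`:
`h_0 = 1`, `h_{n+1}(x) = x h_n(x) - h_n'(x)`. -/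
noncomputable def hermiteR : ℕ → Polynomial ℝ
  | 0 => 1
  | n + 1 => Polynomial.X * hermiteR n - Polynomial.derivative (hermiteR n)

/-- `φ̃_0 = 1` and `φ̃_n(y) = (-1)^y C(n-1, -y)` for `n ≥ 1`. -/
noncomputable def phiTildeFull (n : ℕ) (y : ℤ) : ℝ :=
  if n = 0 then 1 else (-1 : ℝ) ^ y * ((n - 1).choose (-y).toNat : ℝ)

open Polynomial Filter

lemma hermiteR_eq (n : ℕ) : hermiteR n = (Polynomial.hermite n).map (Int.castRingHom ℝ) := by
  induction n with
  | zero => simp [hermiteR, Polynomial.hermite]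
  | succ n ih => simp [hermiteR, Polynomial.hermite_succ, ih, Polynomial.derivative_map]

lemma natDegree_hermiteR (n : ℕ) : (hermiteR n).natDegree = n := by
  rw [hermiteR_eq]
  exact (Polynomial.hermite_monic n).natDegree_map _ |>.trans (Polynomial.natDegree_hermite)

lemma coeff_hermiteR_self (n : ℕ) : (hermiteR n).coeff n = 1 := by
  rw [hermiteR_eq, Polynomial.coeff_map, Polynomial.coeff_hermite_self]; simp

lemma lc_nonneg (p : ℝ[X]) (h : ∀ x, 0 ≤ p.eval x) (hd : 0 < p.degree) : 0 ≤ p.leadingCoeff := by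
  by_contra hlt
  push_neg at hlt
  have ht := Polynomial.tendsto_atBot_of_leadingCoeff_nonpos p hd hlt.le
  obtain ⟨x, hx⟩ := (ht.eventually (Filter.eventually_lt_atBot (0 : ℝ))).exists
  exact absurd (h x) (not_le.mpr hx)

lemma coeff_nonneg_of_eval_nonneg (p : ℝ[X]) (h : ∀ x, 0 ≤ p.eval x) {m : ℕ} (hm : 0 < m)
    (hdeg : p.natDegree ≤ m) : 0 ≤ p.coeff m := by
  rcases eq_or_ne (p.coeff m) 0 with h0 | h0
  · simp [h0]
  have hnd : p.natDegree = m := le_antisymm hdeg (Polynomial.le_natDegree_of_ne_zero h0)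
  have hdpos : 0 < p.degree := Polynomial.natDegree_pos_iff_degree_pos.mp (hnd ▸ hm)
  have := lc_nonneg p h hdpos
  rwa [Polynomial.leadingCoeff, hnd] at this

lemma coeff_eq_zero_of_eval_nonneg_odd (p : ℝ[X]) (h : ∀ x, 0 ≤ p.eval x) {m : ℕ} (hodd : Odd m)
    (hdeg : p.natDegree ≤ m) : p.coeff m = 0 := by
  by_contra h0
  have hnd : p.natDegree = m := le_antisymm hdeg (Polynomial.le_natDegree_of_ne_zero h0)
  have h1 : 0 ≤ p.coeff m := coeff_nonneg_of_eval_nonneg p h hodd.pos hdeg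
  set q : ℝ[X] := p.comp (-X) with hq
  have hqe : ∀ x, 0 ≤ q.eval x := fun x => by
    simpa [hq] using h (-x)
  have hXnd : (-X : ℝ[X]).natDegree = 1 := by simp
  have hqnd : q.natDegree = m := by
    rw [hq, Polynomial.natDegree_comp, hXnd, mul_one, hnd]
  have hqlc : q.coeff m = -(p.coeff m) := by
    have := Polynomial.leadingCoeff_comp (q := (-X : ℝ[X])) (p := p) (by rw [hXnd]; norm_num)
    rw [Polynomial.leadingCoeff, Polynomial.leadingCoeff, hqnd, hnd] at this 
    rw [hq, this]
    have : (-X : ℝ[X]).leadingCoeff = -1 := by simp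
    rw [this, hodd.neg_one_pow, mul_neg_one]
  have h2 : 0 ≤ q.coeff m := coeff_nonneg_of_eval_nonneg q hqe hodd.pos hqnd.le
  rw [hqlc] at h2
  exact h0 (le_antisymm (by linarith) h1)


/-- For `N ≥ 1` and `a = (a_0,…,a_N)` with `a_0 = 1`: if
`∑_{n=0}^N (a_n/n!) φ̃_n(y) h_n(x) ≥ 0` for all `y ∈ {-N,…,0}` and `x ∈ ℝ`, then `a_n = 0`
for every `n ∈ {1,…,N}` (so the only Markov intertwining from the reverse Yule generator
`D̃_N` to the Ornstein–Uhlenbeck generator is trivial). -/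
theorem reverseYule_OU_intertwining_trivial (N : ℕ) (hN : 1 ≤ N) (a : ℕ → ℝ) (ha0 : a 0 = 1)
    (hpos : ∀ y : ℤ, -(N : ℤ) ≤ y → y ≤ 0 → ∀ x : ℝ,
      0 ≤ ∑ n ∈ Finset.range (N + 1),
        (a n / (n.factorial : ℝ)) * phiTildeFull n y * (hermiteR n).eval x) :
    ∀ n, 1 ≤ n → n ≤ N → a n = 0 := by
  set P : ℤ → ℝ[X] := fun y => ∑ k ∈ Finset.range (N + 1),
    Polynomial.C (a k / (k.factorial : ℝ) * phiTildeFull k y) * hermiteR k with hP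
  have heval : ∀ y x, (P y).eval x = ∑ k ∈ Finset.range (N + 1),
      (a k / (k.factorial : ℝ)) * phiTildeFull k y * (hermiteR k).eval x := by
    intro y x
    simp [hP, Polynomial.eval_finset_sum, mul_assoc]
  have hnn : ∀ y : ℤ, -(N : ℤ) ≤ y → y ≤ 0 → ∀ x, 0 ≤ (P y).eval x := by
    intro y h1 h2 x; rw [heval]; exact hpos y h1 h2 x
  -- key step
  have step : ∀ n, 1 ≤ n → n ≤ N → (∀ m, n < m → m ≤ N → a m = 0) → a n = 0 := by
    intro n h1 hnN IH
    have hhi : ∀ y : ℤ, ∀ m, n < m → (P y).coeff m = 0 := by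
      intro y m hm
      rw [hP, Polynomial.finset_sum_coeff]
      refine Finset.sum_eq_zero fun k hk => ?_
      rw [Polynomial.coeff_C_mul]
      rcases lt_or_ge k m with hkm | hkm
      · rw [Polynomial.coeff_eq_zero_of_natDegree_lt (by rw [natDegree_hermiteR]; exact hkm)]
        ring
      · have : a k = 0 := IH k (lt_of_lt_of_le hm hkm) (Nat.lt_succ_iff.mp (Finset.mem_range.mp hk))
        rw [this]; ring
    have hdeg : ∀ y : ℤ, (P y).natDegree ≤ n :=
      fun y => Polynomial.natDegree_le_iff_coeff_eq_zero.mpr fun m hm => hhi y m hm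
    have hco : ∀ y : ℤ, (P y).coeff n = a n / (n.factorial : ℝ) * phiTildeFull n y := by
      intro y
      rw [hP, Polynomial.finset_sum_coeff]
      rw [Finset.sum_eq_single n]
      · rw [Polynomial.coeff_C_mul, coeff_hermiteR_self, mul_one]
      · intro k hk hkn
        rw [Polynomial.coeff_C_mul]
        rcases lt_or_ge k n with hkm | hkm
        · rw [Polynomial.coeff_eq_zero_of_natDegree_lt (by rw [natDegree_hermiteR]; exact hkm)]
          ring
        · have : a k = 0 := IH k (lt_of_le_of_ne hkm (Ne.symm hkn))
            (Nat.lt_succ_iff.mp (Finset.mem_range.mp hk))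
          rw [this]; ring
      · intro hn; exact absurd (Finset.mem_range.mpr (Nat.lt_succ_of_le hnN)) hn
    have hn0 : n ≠ 0 := by omega
    have hphi0 : phiTildeFull n 0 = 1 := by simp [phiTildeFull, hn0]
    have hfac : (0 : ℝ) < (n.factorial : ℝ) := by exact_mod_cast n.factorial_pos
    rcases Nat.even_or_odd n with he | ho
    · -- even case, n ≥ 2
      have hn2 : 2 ≤ n := by rcases he with ⟨t, ht⟩; omega
      have h1' : 0 ≤ (P 0).coeff n :=
        coeff_nonneg_of_eval_nonneg _ (hnn 0 (by simp) le_rfl) (by omega) (hdeg 0)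
      rw [hco 0, hphi0, mul_one] at h1'
      have hy1 : -(N : ℤ) ≤ -1 := by omega
      have h2' : 0 ≤ (P (-1)).coeff n :=
        coeff_nonneg_of_eval_nonneg _ (hnn (-1) hy1 (by omega)) (by omega) (hdeg (-1))
      have hphi1 : phiTildeFull n (-1) = -((n - 1 : ℕ) : ℝ) := by
        simp [phiTildeFull, hn0, Nat.choose_one_right]
      rw [hco (-1), hphi1] at h2'
      have hpos1 : (0 : ℝ) < ((n - 1 : ℕ) : ℝ) := by
        exact_mod_cast Nat.sub_pos_of_lt (by omega)
      have : a n / (n.factorial : ℝ) ≤ 0 := by nlinarith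
      have : a n / (n.factorial : ℝ) = 0 := le_antisymm this h1'
      field_simp at this
      simpa using this
    · have h0 : (P 0).coeff n = 0 :=
        coeff_eq_zero_of_eval_nonneg_odd _ (hnn 0 (by simp) le_rfl) ho (hdeg 0)
      rw [hco 0, hphi0, mul_one] at h0
      field_simp at h0
      simpa using h0
  -- downward induction
  have H : ∀ k, ∀ n, 1 ≤ n → n ≤ N → N - n ≤ k → a n = 0 := by
    intro k
    induction k with
    | zero =>
      intro n h1 h2 h3
      have : n = N := by omega
      exact step n h1 h2 (by omega)
    | succ k ih =>
      intro n h1 h2 h3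
      exact step n h1 h2 fun m hm hmN => ih m (by omega) hmN (by omega)
  exact fun n h1 h2 => H (N - n) n h1 h2 le_rfl
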